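/- Assume that for infinitely many m there exists a graph J on m vertices with α(J) < s and ω(J) < C·m^{2/(s+1)}·log m (for fixed s ≥ 3 and constant C). Then there exists c > 0 such that for infinitely many n there is a graph G on n vertices with no stable set of size s such that every clique cover of G has size at least c·n^{2−4/(s+1)}/(log n)². -/

import Mathlib

open SimpleGraph Finset

/-- A stable (independent) set: pairwise nonadjacent vertices. -/
def IsStableSet {V : Type*} (G : SimpleGraph V) (T : Finset V) : Prop :=
  ∀ ⦃u⦄, u ∈ T → ∀ ⦃v⦄, v ∈ T → u ≠ v → ¬G.Adj u v

/-- A clique cover of `G`. -/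
def IsCliqueCover {V : Type*} (G : SimpleGraph V) (C : Finset (Finset V)) : Prop :=
  (∀ X ∈ C, G.IsClique (X : Set V)) ∧
    ∀ u v : V, G.Adj u v → ∃ X ∈ C, u ∈ X ∧ v ∈ X

/-- Fix `s ≥ 3` and `C > 0`. Assume that for infinitely many `m` there is a graph `J`
on `m` vertices with `α(J) < s` and `ω(J) < C·m^{2/(s+1)}·log m`. Then there exists
`c > 0` such that for infinitely many `n` there is a graph `G` on `n` vertices with no
stable set of size `s` such that every clique cover of `G` has size at least
`c·n^{2-4/(s+1)}/(log n)²`. -/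
theorem stmt_18 (s : ℕ) (hs : 3 ≤ s) (C : ℝ) (hC : 0 < C)
    (hyp : ∀ N : ℕ, ∃ m : ℕ, N ≤ m ∧ ∃ J : SimpleGraph (Fin m),
      (∀ T : Finset (Fin m), IsStableSet J T → T.card < s) ∧
      (∀ K : Finset (Fin m), J.IsClique (K : Set (Fin m)) →
        (K.card : ℝ) < C * (m : ℝ) ^ ((2 : ℝ) / (s + 1 : ℝ)) * Real.logb 2 m)) :
    ∃ c : ℝ, 0 < c ∧ ∀ N : ℕ, ∃ n : ℕ, N ≤ n ∧ ∃ G : SimpleGraph (Fin n),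
      (∀ T : Finset (Fin n), IsStableSet G T → T.card < s) ∧
      ∀ 𝒞 : Finset (Finset (Fin n)), IsCliqueCover G 𝒞 →
        c * (n : ℝ) ^ ((2 : ℝ) - 4 / (s + 1 : ℝ)) / (Real.logb 2 n) ^ 2 ≤ (𝒞.card : ℝ) := by
  classical
  refine ⟨1 / (4 * (s : ℝ) ^ 2 * C ^ 2), by positivity, fun N => ?_⟩
  obtain ⟨m, hmN, J, hstab, hclq⟩ := hyp (max N (2 * s))
  have hm2s : 2 * s ≤ m := le_trans (le_max_right _ _) hmN
  have hsm : s ≤ m := by omega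
  have hm6 : 6 ≤ m := by omega
  refine ⟨m, le_trans (le_max_left _ _) hmN, J, hstab, fun 𝒞 h𝒞 => ?_⟩
  haveI : Nonempty (Fin m) := ⟨⟨0, by omega⟩⟩
  have hm1R : (1 : ℝ) < (m : ℝ) := by exact_mod_cast (by omega : 1 < m)
  have hmpos : (0 : ℝ) < (m : ℝ) := by linarith
  set L : ℝ := Real.logb 2 m with hLdef
  have hL : 0 < L := Real.logb_pos (by norm_num) hm1R
  set B : ℝ := C * (m : ℝ) ^ ((2 : ℝ) / (s + 1 : ℝ)) * L with hBdef
  have hB : 0 < B := by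
    have := Real.rpow_pos_of_pos hmpos ((2 : ℝ) / (s + 1 : ℝ))
    positivity
  -- the set of ordered adjacent pairs
  set D : Finset (Fin m × Fin m) :=
    (Finset.univ ×ˢ Finset.univ).filter (fun p => J.Adj p.1 p.2) with hDdef
  -- every s-subset contains an adjacent pair
  set A : Finset (Finset (Fin m)) := Finset.powersetCard s Finset.univ with hAdef
  have hex : ∀ S ∈ A, ∃ p : Fin m × Fin m, p.1 ∈ S ∧ p.2 ∈ S ∧ J.Adj p.1 p.2 := by
    intro S hS
    rw [hAdef, Finset.mem_powersetCard] at hS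
    by_contra hcon
    push_neg at hcon
    have hstable : IsStableSet J S := by
      intro u hu v hv hne hadj
      exact hcon (u, v) hu hv hadj
    have := hstab S hstable
    omega
  let f : Finset (Fin m) → Fin m × Fin m := fun S =>
    if h : ∃ p : Fin m × Fin m, p.1 ∈ S ∧ p.2 ∈ S ∧ J.Adj p.1 p.2 then h.choose
    else Classical.arbitrary _
  have hf : ∀ S ∈ A, (f S).1 ∈ S ∧ (f S).2 ∈ S ∧ J.Adj (f S).1 (f S).2 := by
    intro S hS
    have h := hex S hS
    simp only [f, dif_pos h]
    exact h.choose_spec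
  -- double counting : A.card ≤ (m.choose (s-2)) * D.card
  have hmain : m.choose s ≤ m.choose (s - 2) * D.card := by
    have hA_card : A.card = m.choose s := by
      rw [hAdef, Finset.card_powersetCard, Finset.card_univ, Fintype.card_fin]
    rw [← hA_card]
    apply Finset.card_le_mul_card_image_of_maps_to (f := f) (t := D)
    · intro S hS
      obtain ⟨h1, h2, h3⟩ := hf S hS
      simp [hDdef, h3]
    · intro p hp
      have hpne : p.1 ≠ p.2 := by
        rw [hDdef, Finset.mem_filter] at hp
        exact hp.2.ne
      have hsub : (A.filter fun S => f S = p) ⊆ A.filter fun S => p.1 ∈ S ∧ p.2 ∈ S := by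
        intro S hS
        rw [Finset.mem_filter] at hS ⊢
        obtain ⟨hSA, hfS⟩ := hS
        obtain ⟨h1, h2, _⟩ := hf S hSA
        exact ⟨hSA, hfS ▸ h1, hfS ▸ h2⟩
      refine le_trans (Finset.card_le_card hsub) ?_
      have : (A.filter fun S => p.1 ∈ S ∧ p.2 ∈ S).card ≤
          (Finset.powersetCard (s - 2) (Finset.univ : Finset (Fin m))).card := by
        apply Finset.card_le_card_of_injOn (fun S => (S.erase p.1).erase p.2)
        · intro S hS
          rw [Finset.mem_coe, Finset.mem_filter] at hS
          obtain ⟨hSA, h1, h2⟩ := hS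
          rw [hAdef, Finset.mem_powersetCard] at hSA
          rw [Finset.mem_coe, Finset.mem_powersetCard]
          refine ⟨Finset.subset_univ _, ?_⟩
          rw [Finset.card_erase_of_mem (Finset.mem_erase.2 ⟨hpne.symm, h2⟩),
            Finset.card_erase_of_mem h1, hSA.2]
          omega
        · intro S1 hS1 S2 hS2 heq
          simp only [Finset.coe_filter, Set.mem_setOf_eq] at hS1 hS2
          dsimp only at heq
          have key : ∀ S : Finset (Fin m), p.1 ∈ S → p.2 ∈ S →
              insert p.1 (insert p.2 ((S.erase p.1).erase p.2)) = S := by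
            intro S h1 h2
            rw [Finset.insert_erase (Finset.mem_erase.2 ⟨hpne.symm, h2⟩),
              Finset.insert_erase h1]
          rw [← key S1 hS1.2.1 hS1.2.2, ← key S2 hS2.2.1 hS2.2.2, heq]
      refine le_trans this ?_
      rw [Finset.card_powersetCard, Finset.card_univ, Fintype.card_fin]
  -- nat identity and cancellation
  have hDlow : (m - s + 2) * (m - s + 1) ≤ D.card * (s * (s - 1)) := by
    obtain ⟨k, hk⟩ : ∃ k, s = k + 2 := ⟨s - 2, by omega⟩
    subst hk
    have c1 : m.choose (k + 1) * (k + 1) = m.choose k * (m - k) :=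
      Nat.choose_succ_right_eq m k
    have c2 : m.choose (k + 2) * (k + 2) = m.choose (k + 1) * (m - (k + 1)) :=
      Nat.choose_succ_right_eq m (k + 1)
    have hid : m.choose (k + 2) * ((k + 2) * (k + 1)) =
        m.choose k * ((m - k) * (m - (k + 1))) := by
      calc m.choose (k + 2) * ((k + 2) * (k + 1))
          = (m.choose (k + 2) * (k + 2)) * (k + 1) := by ring
        _ = (m.choose (k + 1) * (k + 1)) * (m - (k + 1)) := by rw [c2]; ring
        _ = (m.choose k * (m - k)) * (m - (k + 1)) := by rw [c1]
        _ = m.choose k * ((m - k) * (m - (k + 1))) := by ring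
    have hck : 0 < m.choose k := Nat.choose_pos (by omega)
    have hmul : m.choose k * ((m - k) * (m - (k + 1))) ≤
        m.choose k * (D.card * ((k + 2) * (k + 1))) := by
      rw [← hid]
      calc m.choose (k + 2) * ((k + 2) * (k + 1))
          ≤ (m.choose (k + 2 - 2) * D.card) * ((k + 2) * (k + 1)) :=
            Nat.mul_le_mul_right _ hmain
        _ = m.choose k * (D.card * ((k + 2) * (k + 1))) := by
            simp only [Nat.add_sub_cancel]; ring
    have := Nat.le_of_mul_le_mul_left hmul hck
    have e1 : m - (k + 2) + 2 = m - k := by omega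
    have e2 : m - (k + 2) + 1 = m - (k + 1) := by omega
    have e3 : k + 2 - 1 = k + 1 := by omega
    rw [e1, e2, e3]
    exact this
  -- upper bound: clique cover covers all pairs
  have hsubD : D ⊆ 𝒞.biUnion fun X => X ×ˢ X := by
    intro p hp
    rw [hDdef, Finset.mem_filter] at hp
    obtain ⟨X, hX, h1, h2⟩ := h𝒞.2 p.1 p.2 hp.2
    exact Finset.mem_biUnion.2 ⟨X, hX, Finset.mem_product.2 ⟨h1, h2⟩⟩
  have hnat : D.card ≤ ∑ X ∈ 𝒞, X.card * X.card := by
    calc D.card ≤ (𝒞.biUnion fun X => X ×ˢ X).card := Finset.card_le_card hsubD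
      _ ≤ ∑ X ∈ 𝒞, (X ×ˢ X).card := Finset.card_biUnion_le
      _ = ∑ X ∈ 𝒞, X.card * X.card := by simp [Finset.card_product]
  have hup : (D.card : ℝ) ≤ (𝒞.card : ℝ) * B ^ 2 := by
    calc (D.card : ℝ) ≤ ∑ X ∈ 𝒞, ((X.card : ℝ) * (X.card : ℝ)) := by
          exact_mod_cast hnat
      _ ≤ ∑ _X ∈ 𝒞, B ^ 2 := by
          refine Finset.sum_le_sum fun X hX => ?_
          have h := hclq X (h𝒞.1 X hX)
          nlinarith [show (0:ℝ) ≤ (X.card:ℝ) by positivity]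
      _ = (𝒞.card : ℝ) * B ^ 2 := by rw [Finset.sum_const, nsmul_eq_mul]
  -- cast the lower bound to ℝ
  have hDR : ((m : ℝ) - s + 2) * ((m : ℝ) - s + 1) ≤
      (D.card : ℝ) * ((s : ℝ) * ((s : ℝ) - 1)) := by
    have h := (Nat.cast_le (α := ℝ)).2 hDlow
    push_cast [Nat.cast_sub hsm, Nat.cast_sub (show 1 ≤ s by omega)] at h
    linarith
  have hsR : (3 : ℝ) ≤ (s : ℝ) := by exact_mod_cast hs
  have hmsR : 2 * (s : ℝ) ≤ (m : ℝ) := by exact_mod_cast hm2s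
  have hDpos : (0 : ℝ) ≤ (D.card : ℝ) := Nat.cast_nonneg _
  have hlow : (m : ℝ) ^ 2 / 4 ≤ (D.card : ℝ) * (s : ℝ) ^ 2 := by
    have h1 : (m : ℝ) / 2 ≤ (m : ℝ) - s + 1 := by linarith
    have h2 : (m : ℝ) / 2 ≤ (m : ℝ) - s + 2 := by linarith
    have hmul : ((m : ℝ) / 2) * ((m : ℝ) / 2) ≤ ((m : ℝ) - s + 2) * ((m : ℝ) - s + 1) :=
      mul_le_mul h2 h1 (by linarith) (by linarith)
    have h4 : (D.card : ℝ) * ((s : ℝ) * ((s : ℝ) - 1)) ≤ (D.card : ℝ) * (s : ℝ) ^ 2 := by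
      have : (s : ℝ) * ((s : ℝ) - 1) ≤ (s : ℝ) ^ 2 := by nlinarith
      exact mul_le_mul_of_nonneg_left this hDpos
    nlinarith
  -- rpow algebra
  have hBsq : B ^ 2 = C ^ 2 * (m : ℝ) ^ ((4 : ℝ) / ((s : ℝ) + 1)) * L ^ 2 := by
    have h : (m : ℝ) ^ ((2 : ℝ) / ((s : ℝ) + 1)) * (m : ℝ) ^ ((2 : ℝ) / ((s : ℝ) + 1)) =
        (m : ℝ) ^ ((4 : ℝ) / ((s : ℝ) + 1)) := by
      rw [← Real.rpow_add hmpos]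
      congr 1
      ring
    calc B ^ 2 = C ^ 2 * ((m : ℝ) ^ ((2 : ℝ) / ((s : ℝ) + 1)) *
          (m : ℝ) ^ ((2 : ℝ) / ((s : ℝ) + 1))) * L ^ 2 := by rw [hBdef]; ring
      _ = C ^ 2 * (m : ℝ) ^ ((4 : ℝ) / ((s : ℝ) + 1)) * L ^ 2 := by rw [h]
  have hexp : (m : ℝ) ^ ((2 : ℝ) - 4 / ((s : ℝ) + 1)) * (m : ℝ) ^ ((4 : ℝ) / ((s : ℝ) + 1)) =
      (m : ℝ) ^ 2 := by
    rw [← Real.rpow_add hmpos,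
      show (2 : ℝ) - 4 / ((s : ℝ) + 1) + 4 / ((s : ℝ) + 1) = ((2 : ℕ) : ℝ) by push_cast; ring,
      Real.rpow_natCast]
  have hC2 : (C : ℝ) ^ 2 ≠ 0 := by positivity
  have hL2 : L ^ 2 ≠ 0 := by positivity
  have hs0 : (0 : ℝ) < (s : ℝ) := by linarith
  set c : ℝ := 1 / (4 * (s : ℝ) ^ 2 * C ^ 2) with hcdef
  set e : ℝ := (2 : ℝ) - 4 / ((s : ℝ) + 1) with hedef
  have step : c * (m : ℝ) ^ e / L ^ 2 * B ^ 2 ≤ (D.card : ℝ) := by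
    rw [hBsq]
    have heq : c * (m : ℝ) ^ e / L ^ 2 * (C ^ 2 * (m : ℝ) ^ ((4 : ℝ) / ((s : ℝ) + 1)) * L ^ 2) =
        ((m : ℝ) ^ e * (m : ℝ) ^ ((4 : ℝ) / ((s : ℝ) + 1))) * (C ^ 2 / C ^ 2) *
          (L ^ 2 / L ^ 2) * (1 / (4 * (s : ℝ) ^ 2)) := by
      rw [hcdef]; ring
    rw [heq, hexp, div_self hC2, div_self hL2]
    rw [mul_one, mul_one, mul_one_div, div_le_iff₀ (by positivity : (0 : ℝ) < 4 * (s : ℝ) ^ 2)]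
    linarith [hlow]
  have hB2pos : (0 : ℝ) < B ^ 2 := by positivity
  exact le_of_mul_le_mul_right (step.trans hup) hB2pos
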